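/- Let m, M with 0 < m ≤ M < 1 and an integer q ≥ 1 satisfy M^{q+1} < m. Let A : ℂ^k → ℂ^k be an invertible linear map with m|v| ≤ |A v| ≤ M|v| for all v. Let F : B(0,r) → ℂ^k be holomorphic with F(0) = 0, tangent to A at order q+1 (i.e. the Taylor expansions of F and A agree up to degree q), and with all Taylor coefficients of F bounded by a constant C. Then the sequence T_n := A^{-n} ∘ F^n converges uniformly on a sufficiently small ball B(0,ρ) to a holomorphic map T with T(0) = 0 and d_0 T = Id satisfying T ∘ F = A ∘ T near 0; moreover |T(v) − v| ≤ C' |v|^{q+1} on B(0,ρ) for some constant C'. -/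

import Mathlib

open Metric Filter

lemma fderiv_norm_le_of_bounded_htc {𝔼 G : Type*} [NormedAddCommGroup 𝔼] [NormedSpace ℂ 𝔼]
    [NormedAddCommGroup G] [NormedSpace ℂ G] [CompleteSpace G]
    {f : 𝔼 → G} {R c δ : ℝ} (hδ : 0 < δ)
    (hf : DifferentiableOn ℂ f (ball 0 R))
    (hc : ∀ y ∈ ball (0 : 𝔼) R, ‖f y‖ ≤ c)
    {x : 𝔼} (hx : ‖x‖ + δ < R) :
    ‖fderiv ℂ f x‖ ≤ c / δ := by
  have hR : 0 < R := lt_of_le_of_lt (by positivity) hx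
  have hc0 : 0 ≤ c := le_trans (norm_nonneg _) (hc 0 (by simpa using hR))
  have hxball : x ∈ ball (0 : 𝔼) R := by
    simp only [mem_ball, dist_zero_right]
    nlinarith
  have hdx : DifferentiableAt ℂ f x := hf.differentiableAt (isOpen_ball.mem_nhds hxball)
  refine ContinuousLinearMap.opNorm_le_bound _ (div_nonneg hc0 hδ.le) fun w => ?_
  rcases eq_or_ne w 0 with rfl | hw
  · simp
  have hw0 : 0 < ‖w‖ := norm_pos_iff.mpr hw
  set L : ℂ → 𝔼 := fun z => x + z • w with hL
  set t : ℝ := δ / ‖w‖ with htdef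
  have ht : 0 < t := div_pos hδ hw0
  have key : ∀ z : ℂ, ‖z‖ ≤ t → L z ∈ ball (0 : 𝔼) R := by
    intro z hz
    simp only [hL, mem_ball, dist_zero_right]
    calc ‖x + z • w‖ ≤ ‖x‖ + ‖z‖ * ‖w‖ := by
          refine (norm_add_le _ _).trans ?_
          rw [norm_smul]
      _ ≤ ‖x‖ + t * ‖w‖ := by nlinarith
      _ < R := by rw [htdef, div_mul_cancel₀ _ hw0.ne']; exact hx
  set U : Set ℂ := L ⁻¹' (ball 0 R) with hU
  have hUopen : IsOpen U := isOpen_ball.preimage (by fun_prop)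
  have hLdiff : Differentiable ℂ L := by
    intro z
    exact (differentiableAt_id.smul_const w).const_add x
  have hφdiff : DifferentiableOn ℂ (f ∘ L) U :=
    hf.comp (hLdiff.differentiableOn) fun z hz => hz
  have hsub : closedBall (0 : ℂ) t ⊆ U := by
    intro z hz
    simp only [mem_closedBall, dist_zero_right] at hz
    exact key z hz
  have hder : HasDerivAt (f ∘ L) (fderiv ℂ f x w) 0 := by
    have h1 : HasDerivAt L w 0 := by
      simpa [hL] using ((hasDerivAt_id (0 : ℂ)).smul_const w).const_add x
    have h2 : HasFDerivAt f (fderiv ℂ f x) (L 0) := by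
      simpa [hL] using hdx.hasFDerivAt
    exact h2.comp_hasDerivAt 0 h1
  have heq : Complex.cderiv t (f ∘ L) 0 = fderiv ℂ f x w := by
    rw [Complex.cderiv_eq_deriv hUopen hφdiff ht hsub, hder.deriv]
  have hb : ‖Complex.cderiv t (f ∘ L) 0‖ ≤ c / t := by
    refine Complex.norm_cderiv_le ht fun z hz => ?_
    simp only [mem_sphere_iff_norm, sub_zero] at hz
    exact hc _ (key z hz.le)
  rw [← heq]
  calc ‖Complex.cderiv t (f ∘ L) 0‖ ≤ c / t := hb
    _ = c / δ * ‖w‖ := by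
        rw [htdef, div_div_eq_mul_div, div_mul_eq_mul_div, mul_comm]

set_option maxHeartbeats 4000000 in
theorem high_tangency_conjugation {k : ℕ} (m M : ℝ) (q : ℕ)
    (hm : 0 < m) (hmM : m ≤ M) (hM : M < 1) (hq : 1 ≤ q) (hres : M ^ (q + 1) < m)
    (A : EuclideanSpace ℂ (Fin k) ≃L[ℂ] EuclideanSpace ℂ (Fin k))
    (hA : ∀ v, m * ‖v‖ ≤ ‖A v‖ ∧ ‖A v‖ ≤ M * ‖v‖)
    (r C : ℝ) (hr : 0 < r) (hC : 0 ≤ C)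
    (F : EuclideanSpace ℂ (Fin k) → EuclideanSpace ℂ (Fin k))
    (p : FormalMultilinearSeries ℂ (EuclideanSpace ℂ (Fin k)) (EuclideanSpace ℂ (Fin k)))
    (hF : HasFPowerSeriesOnBall F p 0 (ENNReal.ofReal r))
    (hp0 : p 0 = 0)
    (hp1 : ∀ v, p 1 (fun _ => v) = A v)
    (htang : ∀ n, 2 ≤ n → n ≤ q → p n = 0)
    (hcoef : ∀ n, ‖p n‖ ≤ C) :
    ∃ ρ : ℝ, 0 < ρ ∧ ρ ≤ r ∧
      ∃ T : EuclideanSpace ℂ (Fin k) → EuclideanSpace ℂ (Fin k), ∃ C' : ℝ, 0 ≤ C' ∧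
        TendstoUniformlyOn (fun n v => (⇑A.symm)^[n] (F^[n] v)) T atTop
          (ball (0 : EuclideanSpace ℂ (Fin k)) ρ) ∧
        DifferentiableOn ℂ T (ball 0 ρ) ∧
        T 0 = 0 ∧
        fderiv ℂ T 0 = ContinuousLinearMap.id ℂ (EuclideanSpace ℂ (Fin k)) ∧
        (∀ v ∈ ball (0 : EuclideanSpace ℂ (Fin k)) ρ, T (F v) = A (T v)) ∧
        (∀ v ∈ ball (0 : EuclideanSpace ℂ (Fin k)) ρ, ‖T v - v‖ ≤ C' * ‖v‖ ^ (q + 1)) := by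
  classical
  -- F 0 = 0
  have hF0 : F 0 = 0 := by
    have h := hF.coeff_zero (fun _ => 0)
    rw [hp0] at h
    simpa using h.symm
  -- Taylor remainder bound
  have hps : ∀ y, p.partialSum (q + 1) y = A y := by
    intro y
    rw [FormalMultilinearSeries.partialSum]
    rw [Finset.sum_eq_single 1]
    · exact hp1 y
    · rintro (_ | _ | b) hb hb1
      · simp [hp0]
      · exact absurd rfl hb1
      · have hble := Finset.mem_range.mp hb
        rw [htang (b + 2) (by omega) (by omega)]
        simp
    · intro h
      exact absurd (Finset.mem_range.mpr (by omega)) h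
  have hbig : (fun y : EuclideanSpace ℂ (Fin k) => F y - A y) =O[nhds 0] fun y => ‖y‖ ^ (q + 1) := by
    have h := hF.hasFPowerSeriesAt.isBigO_sub_partialSum_pow (q + 1)
    simpa [hps] using h
  obtain ⟨c, hc0, hcb⟩ := hbig.exists_pos
  have hcb' := hcb.bound
  rw [Metric.eventually_nhds_iff] at hcb'
  obtain ⟨r₀, hr₀, hKb⟩ := hcb'
  have hEb : ∀ v : EuclideanSpace ℂ (Fin k), ‖v‖ < r₀ → ‖F v - A v‖ ≤ c * ‖v‖ ^ (q + 1) := by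
    intro v hv
    have h := hKb (y := v) (by simpa [dist_zero_right] using hv)
    simpa [norm_pow, norm_norm] using h
  -- choice of ε, M'
  have hev : ∀ᶠ t : ℝ in nhds 0, (M + t) ^ (q + 1) < m ∧ M + t < 1 := by
    have h2 : Tendsto (fun t : ℝ => M + t) (nhds 0) (nhds (M + 0)) :=
      tendsto_const_nhds.add tendsto_id
    rw [add_zero] at h2
    have h1 : Tendsto (fun t : ℝ => (M + t) ^ (q + 1)) (nhds 0) (nhds (M ^ (q + 1))) := h2.pow _
    exact (h1.eventually_lt_const hres).and (h2.eventually_lt_const hM)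
  rw [Metric.eventually_nhds_iff] at hev
  obtain ⟨ε₀, hε₀, hev⟩ := hev
  set ε : ℝ := ε₀ / 2 with hεdef
  have hε : 0 < ε := by positivity
  obtain ⟨hM'm, hM'1⟩ := hev (y := ε) (by rw [Real.dist_eq, sub_zero, abs_of_pos hε]; linarith)
  set M' : ℝ := M + ε with hM'def
  have hM'0 : 0 < M' := by have := lt_of_lt_of_le hm hmM; simp only [hM'def]; linarith
  have hM'le1 : M' ≤ 1 := hM'1.le
  -- radius ρ₂
  set ρ₂ : ℝ := min (min 1 (ε / c)) (min r r₀) with hρ₂def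
  have hρ₂ : 0 < ρ₂ := lt_min (lt_min one_pos (div_pos hε hc0)) (lt_min hr hr₀)
  have hρ₂r : ρ₂ ≤ r := le_trans (min_le_right _ _) (min_le_left _ _)
  have hρ₂r₀ : ρ₂ ≤ r₀ := le_trans (min_le_right _ _) (min_le_right _ _)
  have hρ₂1 : ρ₂ ≤ 1 := le_trans (min_le_left _ _) (min_le_left _ _)
  have hρ₂ε : ρ₂ ≤ ε / c := le_trans (min_le_left _ _) (min_le_right _ _)
  have hcρ : ∀ v : EuclideanSpace ℂ (Fin k), ‖v‖ < ρ₂ → c * ‖v‖ ^ q ≤ ε := by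
    intro v hv
    have h1 : ‖v‖ ^ q ≤ ρ₂ ^ q := pow_le_pow_left₀ (norm_nonneg v) hv.le q
    have h2 : ρ₂ ^ q ≤ ρ₂ ^ 1 := pow_le_pow_of_le_one hρ₂.le hρ₂1 hq
    have h3 : c * ρ₂ ≤ ε := by
      rw [le_div_iff₀ hc0] at hρ₂ε
      linarith
    rw [pow_one] at h2
    calc c * ‖v‖ ^ q ≤ c * ρ₂ ^ q := mul_le_mul_of_nonneg_left h1 hc0.le
      _ ≤ c * ρ₂ := mul_le_mul_of_nonneg_left h2 hc0.le
      _ ≤ ε := h3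
  -- contraction estimates
  have hFv : ∀ v : EuclideanSpace ℂ (Fin k), ‖v‖ < ρ₂ → ‖F v‖ ≤ M' * ‖v‖ := by
    intro v hv
    have h1 := hEb v (lt_of_lt_of_le hv hρ₂r₀)
    have h2 := (hA v).2
    have h3 : c * ‖v‖ ^ (q + 1) ≤ ε * ‖v‖ := by
      have := hcρ v hv
      rw [pow_succ]
      nlinarith [norm_nonneg v]
    calc ‖F v‖ = ‖A v + (F v - A v)‖ := by rw [add_sub_cancel]
      _ ≤ ‖A v‖ + ‖F v - A v‖ := norm_add_le _ _
      _ ≤ M * ‖v‖ + ε * ‖v‖ := by linarith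
      _ = M' * ‖v‖ := by rw [hM'def]; ring
  have hFiter : ∀ v : EuclideanSpace ℂ (Fin k), ‖v‖ < ρ₂ →
      ∀ n, ‖F^[n] v‖ ≤ M' ^ n * ‖v‖ := by
    intro v hv n
    induction n with
    | zero => simp
    | succ n ih =>
      have hpow : M' ^ n ≤ 1 := pow_le_one₀ hM'0.le hM'le1
      have hmem : ‖F^[n] v‖ < ρ₂ := by nlinarith [norm_nonneg v]
      rw [Function.iterate_succ_apply']
      calc ‖F (F^[n] v)‖ ≤ M' * ‖F^[n] v‖ := hFv _ hmem
        _ ≤ M' * (M' ^ n * ‖v‖) := by nlinarith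
        _ = M' ^ (n + 1) * ‖v‖ := by ring
  have hFmem : ∀ v : EuclideanSpace ℂ (Fin k), ‖v‖ < ρ₂ → ∀ n, ‖F^[n] v‖ < ρ₂ := by
    intro v hv n
    have hpow : M' ^ n ≤ 1 := pow_le_one₀ hM'0.le hM'le1
    have := hFiter v hv n
    nlinarith [norm_nonneg v]
  -- bounds for A.symm
  have hSb : ∀ x : EuclideanSpace ℂ (Fin k), ‖A.symm x‖ ≤ m⁻¹ * ‖x‖ := by
    intro x
    have h := (hA (A.symm x)).1
    rw [A.apply_symm_apply] at h
    calc ‖A.symm x‖ = m⁻¹ * (m * ‖A.symm x‖) := by field_simp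
      _ ≤ m⁻¹ * ‖x‖ := mul_le_mul_of_nonneg_left h (inv_nonneg.mpr hm.le)
  have hSiter : ∀ n, ∀ x : EuclideanSpace ℂ (Fin k), ‖(⇑A.symm)^[n] x‖ ≤ m⁻¹ ^ n * ‖x‖ := by
    intro n
    induction n with
    | zero => simp
    | succ n ih =>
      intro x
      rw [Function.iterate_succ_apply']
      calc ‖A.symm ((⇑A.symm)^[n] x)‖ ≤ m⁻¹ * ‖(⇑A.symm)^[n] x‖ := hSb _
        _ ≤ m⁻¹ * (m⁻¹ ^ n * ‖x‖) :=
            mul_le_mul_of_nonneg_left (ih x) (inv_nonneg.mpr hm.le)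
        _ = m⁻¹ ^ (n + 1) * ‖x‖ := by ring
  have hSsub : ∀ n, ∀ x y : EuclideanSpace ℂ (Fin k),
      (⇑A.symm)^[n] x - (⇑A.symm)^[n] y = (⇑A.symm)^[n] (x - y) := by
    intro n
    induction n with
    | zero => simp
    | succ n ih =>
      intro x y
      rw [Function.iterate_succ_apply, Function.iterate_succ_apply,
        Function.iterate_succ_apply, ih, ← map_sub]
  -- the sequence and its increments
  set u : ℕ → EuclideanSpace ℂ (Fin k) → EuclideanSpace ℂ (Fin k) :=
    fun n v => (⇑A.symm)^[n] (F^[n] v) with hudef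
  set g : ℕ → EuclideanSpace ℂ (Fin k) → EuclideanSpace ℂ (Fin k) :=
    fun n v => u (n + 1) v - u n v with hgdef
  set θ : ℝ := M' ^ (q + 1) / m with hθdef
  have hθ0 : 0 ≤ θ := div_nonneg (pow_nonneg hM'0.le _) hm.le
  have hθ1 : θ < 1 := (div_lt_one hm).mpr hM'm
  have hgkey : ∀ n, ∀ v : EuclideanSpace ℂ (Fin k), ‖v‖ < ρ₂ →
      ‖g n v‖ ≤ c / m * θ ^ n * ‖v‖ ^ (q + 1) := by
    intro n v hv
    have h1 : g n v = (⇑A.symm)^[n + 1] (F (F^[n] v) - A (F^[n] v)) := by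
      have h2 : u n v = (⇑A.symm)^[n + 1] (A (F^[n] v)) := by
        rw [hudef]
        simp only [Function.iterate_succ_apply (f := ⇑A.symm), A.symm_apply_apply]
      have h3 : u (n + 1) v = (⇑A.symm)^[n + 1] (F (F^[n] v)) := by
        rw [hudef]
        simp only [Function.iterate_succ_apply' (f := F)]
      rw [hgdef]
      simp only [h2, h3, hSsub]
    have hmem := hFmem v hv n
    have h3 : ‖F (F^[n] v) - A (F^[n] v)‖ ≤ c * ‖F^[n] v‖ ^ (q + 1) :=
      hEb _ (lt_of_lt_of_le hmem hρ₂r₀)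
    have h4 : ‖F^[n] v‖ ^ (q + 1) ≤ (M' ^ n * ‖v‖) ^ (q + 1) :=
      pow_le_pow_left₀ (norm_nonneg _) (hFiter v hv n) _
    calc ‖g n v‖ ≤ m⁻¹ ^ (n + 1) * ‖F (F^[n] v) - A (F^[n] v)‖ := by
          rw [h1]; exact hSiter _ _
      _ ≤ m⁻¹ ^ (n + 1) * (c * ((M' ^ n * ‖v‖) ^ (q + 1))) := by
          refine mul_le_mul_of_nonneg_left ?_ (by positivity)
          exact h3.trans (mul_le_mul_of_nonneg_left h4 hc0.le)
      _ = c / m * θ ^ n * ‖v‖ ^ (q + 1) := by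
          have hpowcomm : (M' ^ n) ^ (q + 1) = (M' ^ (q + 1)) ^ n := by
            rw [← pow_mul, ← pow_mul, Nat.mul_comm]
          rw [mul_pow, hpowcomm, hθdef, div_pow, pow_succ]
          field_simp
          ring_nf
          rw [← mul_pow, mul_inv_cancel₀ hm.ne', one_pow, one_mul]
  set D : ℝ := c / m * ρ₂ ^ (q + 1) with hDdef
  have hD0 : 0 ≤ D := by positivity
  have hgU : ∀ n, ∀ v : EuclideanSpace ℂ (Fin k), v ∈ ball (0 : EuclideanSpace ℂ (Fin k)) ρ₂ →
      ‖g n v‖ ≤ D * θ ^ n := by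
    intro n v hv
    rw [mem_ball, dist_zero_right] at hv
    have h1 := hgkey n v hv
    have h2 : ‖v‖ ^ (q + 1) ≤ ρ₂ ^ (q + 1) := pow_le_pow_left₀ (norm_nonneg _) hv.le _
    calc ‖g n v‖ ≤ c / m * θ ^ n * ‖v‖ ^ (q + 1) := h1
      _ ≤ c / m * θ ^ n * ρ₂ ^ (q + 1) := by
          refine mul_le_mul_of_nonneg_left h2 (by positivity)
      _ = D * θ ^ n := by rw [hDdef]; ring
  have hsumD : Summable (fun n : ℕ => D * θ ^ n) :=
    (summable_geometric_of_lt_one hθ0 hθ1).mul_left D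
  have hTU₂ : TendstoUniformlyOn (fun N v => ∑ n ∈ Finset.range N, g n v)
      (fun v => ∑' n, g n v) atTop (ball (0 : EuclideanSpace ℂ (Fin k)) ρ₂) :=
    tendstoUniformlyOn_tsum_nat hsumD hgU
  set T : EuclideanSpace ℂ (Fin k) → EuclideanSpace ℂ (Fin k) :=
    fun v => v + ∑' n, g n v with hTdef
  have hpart : ∀ N, ∀ v : EuclideanSpace ℂ (Fin k),
      ∑ n ∈ Finset.range N, g n v = u N v - v := by
    intro N v
    rw [hgdef]
    rw [Finset.sum_range_sub (f := fun n => u n v)]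
    simp [hudef]
  set ρ : ℝ := ρ₂ / 2 with hρdef
  have hρ : 0 < ρ := by positivity
  have hρρ₂ : ρ < ρ₂ := by rw [hρdef]; linarith
  have hball : ball (0 : EuclideanSpace ℂ (Fin k)) ρ ⊆ ball 0 ρ₂ := ball_subset_ball hρρ₂.le
  -- uniform convergence of u to T on ball ρ
  have hTU : TendstoUniformlyOn u T atTop (ball (0 : EuclideanSpace ℂ (Fin k)) ρ) := by
    have h := hTU₂.mono hball
    rw [Metric.tendstoUniformlyOn_iff] at h ⊢
    intro ε' hε'
    filter_upwards [h ε' hε'] with N hN v hv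
    have h2 := hN v hv
    rw [hpart] at h2
    rw [dist_eq_norm] at h2 ⊢
    have heq : T v - u N v = (∑' n, g n v) - (u N v - v) := by
      show v + (∑' n, g n v) - u N v = (∑' n, g n v) - (u N v - v)
      abel
    rw [heq]
    exact h2
  -- pointwise convergence
  have hTpt : ∀ v ∈ ball (0 : EuclideanSpace ℂ (Fin k)) ρ₂,
      Tendsto (fun n => u n v) atTop (nhds (T v)) := by
    intro v hv
    have h := (tendsto_const_nhds (x := v)).add (hTU₂.tendsto_at hv)
    simp only [hpart] at h
    have heq : (fun N => v + (u N v - v)) = fun N => u N v := by funext N; abel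
    rw [heq] at h
    exact h
  -- T 0 = 0
  have hu0 : ∀ n, u n 0 = 0 := by
    intro n
    have hFn0 : F^[n] 0 = 0 := Function.iterate_fixed hF0 n
    have hSn0 : (⇑A.symm)^[n] (0 : EuclideanSpace ℂ (Fin k)) = 0 :=
      Function.iterate_fixed (by simp) n
    show (⇑A.symm)^[n] (F^[n] 0) = 0
    rw [hFn0]
    exact hSn0
  have hg0 : ∀ n, g n 0 = 0 := by
    intro n
    show u (n + 1) 0 - u n 0 = 0
    rw [hu0, hu0, sub_zero]
  have hT0 : T 0 = 0 := by
    show (0 : EuclideanSpace ℂ (Fin k)) + ∑' n, g n 0 = 0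
    rw [tsum_congr hg0, tsum_zero, add_zero]
  -- the error bound
  set C' : ℝ := c / m / (1 - θ) with hC'def
  have hC'0 : 0 ≤ C' := by
    have : 0 < 1 - θ := by linarith
    positivity
  have hTbound : ∀ v ∈ ball (0 : EuclideanSpace ℂ (Fin k)) ρ,
      ‖T v - v‖ ≤ C' * ‖v‖ ^ (q + 1) := by
    intro v hv
    rw [mem_ball, dist_zero_right] at hv
    have hv₂ : ‖v‖ < ρ₂ := hv.trans hρρ₂
    have hbnd : ∀ n, ‖g n v‖ ≤ (c / m * ‖v‖ ^ (q + 1)) * θ ^ n := by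
      intro n
      have := hgkey n v hv₂
      calc ‖g n v‖ ≤ c / m * θ ^ n * ‖v‖ ^ (q + 1) := this
        _ = (c / m * ‖v‖ ^ (q + 1)) * θ ^ n := by ring
    have hsum2 : Summable (fun n : ℕ => (c / m * ‖v‖ ^ (q + 1)) * θ ^ n) :=
      (summable_geometric_of_lt_one hθ0 hθ1).mul_left _
    have hsg : Summable (fun n => g n v) := by
      refine Summable.of_norm (Summable.of_nonneg_of_le (fun n => norm_nonneg _) hbnd hsum2)
    have h1 : ‖T v - v‖ = ‖∑' n, g n v‖ := by
      show ‖v + (∑' n, g n v) - v‖ = _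
      rw [add_sub_cancel_left]
    rw [h1]
    calc ‖∑' n, g n v‖ ≤ ∑' n, ‖g n v‖ := norm_tsum_le_tsum_norm hsg.norm
      _ ≤ ∑' n : ℕ, (c / m * ‖v‖ ^ (q + 1)) * θ ^ n := Summable.tsum_le_tsum hbnd hsg.norm hsum2
      _ = (c / m * ‖v‖ ^ (q + 1)) * (1 - θ)⁻¹ := by
          rw [tsum_mul_left, tsum_geometric_of_lt_one hθ0 hθ1]
      _ = C' * ‖v‖ ^ (q + 1) := by rw [hC'def, div_eq_mul_inv (c / m)]; ring
  -- derivative at 0 is the identity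
  have hDer0 : HasFDerivAt T (ContinuousLinearMap.id ℂ (EuclideanSpace ℂ (Fin k))) 0 := by
    rw [hasFDerivAt_iff_isLittleO_nhds_zero]
    simp only [zero_add, hT0, sub_zero, ContinuousLinearMap.id_apply]
    rw [Asymptotics.isLittleO_iff]
    intro c' hc'
    have h1 : Tendsto (fun h : EuclideanSpace ℂ (Fin k) => C' * ‖h‖ ^ q) (nhds 0)
        (nhds (C' * ‖(0 : EuclideanSpace ℂ (Fin k))‖ ^ q)) :=
      tendsto_const_nhds.mul ((continuous_norm.tendsto _).pow q)
    have h1' : C' * ‖(0 : EuclideanSpace ℂ (Fin k))‖ ^ q = 0 := by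
      rw [norm_zero, zero_pow (by omega), mul_zero]
    rw [h1'] at h1
    have h2 : ∀ᶠ x : EuclideanSpace ℂ (Fin k) in nhds 0, x ∈ ball (0 : EuclideanSpace ℂ (Fin k)) ρ :=
      isOpen_ball.eventually_mem (mem_ball_self hρ)
    filter_upwards [h1.eventually_lt_const hc', h2] with x hlt hmem
    calc ‖T x - x‖ ≤ C' * ‖x‖ ^ (q + 1) := hTbound x hmem
      _ = (C' * ‖x‖ ^ q) * ‖x‖ := by ring
      _ ≤ c' * ‖x‖ := mul_le_mul_of_nonneg_right hlt.le (norm_nonneg _)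
  -- invariance of the small ball and the conjugation identity
  have hFmemρ : ∀ v ∈ ball (0 : EuclideanSpace ℂ (Fin k)) ρ, F v ∈ ball (0 : EuclideanSpace ℂ (Fin k)) ρ := by
    intro v hv
    rw [mem_ball, dist_zero_right] at hv ⊢
    calc ‖F v‖ ≤ M' * ‖v‖ := hFv v (hv.trans hρρ₂)
      _ ≤ 1 * ‖v‖ := mul_le_mul_of_nonneg_right hM'le1 (norm_nonneg _)
      _ = ‖v‖ := one_mul _
      _ < ρ := hv
  have hconj : ∀ v ∈ ball (0 : EuclideanSpace ℂ (Fin k)) ρ, T (F v) = A (T v) := by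
    intro v hv
    have hFvρ₂ : F v ∈ ball (0 : EuclideanSpace ℂ (Fin k)) ρ₂ := hball (hFmemρ v hv)
    have h1 : Tendsto (fun n => u n (F v)) atTop (nhds (T (F v))) := hTpt _ hFvρ₂
    have h2 : Tendsto (fun n => u (n + 1) v) atTop (nhds (T v)) :=
      (hTpt v (hball hv)).comp (tendsto_add_atTop_nat 1)
    have h3 : Tendsto (fun n => A (u (n + 1) v)) atTop (nhds (A (T v))) :=
      (A.continuous.tendsto _).comp h2
    have heq : ∀ n, u n (F v) = A (u (n + 1) v) := by
      intro n
      show (⇑A.symm)^[n] (F^[n] (F v)) = A ((⇑A.symm)^[n + 1] (F^[n + 1] v))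
      rw [← Function.iterate_succ_apply (f := F),
        Function.iterate_succ_apply' (f := ⇑A.symm), A.apply_symm_apply]
    have h1' : Tendsto (fun n => A (u (n + 1) v)) atTop (nhds (T (F v))) := h1.congr heq
    exact tendsto_nhds_unique h1' h3
  -- differentiability
  have hFdAt : ∀ x : EuclideanSpace ℂ (Fin k), ‖x‖ < r → DifferentiableAt ℂ F x := by
    intro x hx
    have hx' : x ∈ Metric.eball (0 : EuclideanSpace ℂ (Fin k)) (ENNReal.ofReal r) := by
      rw [Metric.mem_eball]
      exact edist_lt_ofReal.mpr (by rwa [dist_zero_right])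
    exact (hF.differentiableOn x hx').differentiableAt (Metric.isOpen_eball.mem_nhds hx')
  have huDiff : ∀ N, ∀ x ∈ ball (0 : EuclideanSpace ℂ (Fin k)) ρ₂, DifferentiableAt ℂ (u N) x := by
    intro N
    induction N with
    | zero =>
      intro x hx
      have h0 : u 0 = fun v => v := by
        funext v
        show (⇑A.symm)^[0] (F^[0] v) = v
        simp
      rw [h0]
      exact differentiableAt_fun_id
    | succ N ih =>
      intro x hx
      rw [mem_ball, dist_zero_right] at hx
      have hrepr : u (N + 1) = fun v => A.symm (u N (F v)) := by
        funext v
        show (⇑A.symm)^[N + 1] (F^[N + 1] v) = A.symm (u N (F v))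
        rw [Function.iterate_succ_apply (f := F), Function.iterate_succ_apply' (f := ⇑A.symm)]
      rw [hrepr]
      have h1 : DifferentiableAt ℂ F x := hFdAt x (hx.trans_le hρ₂r)
      have hFx : F x ∈ ball (0 : EuclideanSpace ℂ (Fin k)) ρ₂ := by
        rw [mem_ball, dist_zero_right]
        calc ‖F x‖ ≤ M' * ‖x‖ := hFv x hx
          _ ≤ 1 * ‖x‖ := mul_le_mul_of_nonneg_right hM'le1 (norm_nonneg _)
          _ = ‖x‖ := one_mul _
          _ < ρ₂ := hx
      have h2 : DifferentiableAt ℂ (u N) (F x) := ih (F x) hFx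
      exact A.symm.differentiableAt.comp x (h2.comp x h1)
  have hgDiffAt : ∀ n, ∀ x ∈ ball (0 : EuclideanSpace ℂ (Fin k)) ρ₂, DifferentiableAt ℂ (g n) x := by
    intro n x hx
    exact (huDiff (n + 1) x hx).sub (huDiff n x hx)
  have hgDiffOn : ∀ n, DifferentiableOn ℂ (g n) (ball (0 : EuclideanSpace ℂ (Fin k)) ρ₂) :=
    fun n x hx => (hgDiffAt n x hx).differentiableWithinAt
  set δ' : ℝ := ρ₂ / 4 with hδ'def
  have hδ' : 0 < δ' := by positivity
  have hgfd : ∀ n, ∀ x ∈ ball (0 : EuclideanSpace ℂ (Fin k)) ρ,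
      ‖fderiv ℂ (g n) x‖ ≤ D / δ' * θ ^ n := by
    intro n x hx
    rw [mem_ball, dist_zero_right] at hx
    have hxδ : ‖x‖ + δ' < ρ₂ := by
      rw [hρdef] at hx
      rw [hδ'def]
      linarith
    have h := fderiv_norm_le_of_bounded_htc hδ' (hgDiffOn n) (fun y hy => hgU n y hy) hxδ
    calc ‖fderiv ℂ (g n) x‖ ≤ D * θ ^ n / δ' := h
      _ = D / δ' * θ ^ n := by ring
  have hsumD' : Summable (fun n : ℕ => D / δ' * θ ^ n) :=
    (summable_geometric_of_lt_one hθ0 hθ1).mul_left _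
  have hTU' : TendstoUniformlyOn (fun N x => ∑ n ∈ Finset.range N, fderiv ℂ (g n) x)
      (fun x => ∑' n, fderiv ℂ (g n) x) atTop (ball (0 : EuclideanSpace ℂ (Fin k)) ρ) :=
    tendstoUniformlyOn_tsum_nat hsumD' hgfd
  have hpd : ∀ N : ℕ, ∀ x ∈ ball (0 : EuclideanSpace ℂ (Fin k)) ρ,
      HasFDerivAt (fun v => ∑ n ∈ Finset.range N, g n v)
        (∑ n ∈ Finset.range N, fderiv ℂ (g n) x) x := by
    intro N x hx
    exact HasFDerivAt.fun_sum fun i _ => (hgDiffAt i x (hball hx)).hasFDerivAt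
  have hptG : ∀ x ∈ ball (0 : EuclideanSpace ℂ (Fin k)) ρ,
      Tendsto (fun N => ∑ n ∈ Finset.range N, g n x) atTop (nhds (∑' n, g n x)) :=
    fun x hx => (hTU₂.mono hball).tendsto_at hx
  have hGd : ∀ x ∈ ball (0 : EuclideanSpace ℂ (Fin k)) ρ,
      HasFDerivAt (fun v => ∑' n, g n v) (∑' n, fderiv ℂ (g n) x) x := by
    intro x hx
    exact hasFDerivAt_of_tendstoUniformlyOn isOpen_ball hTU'
      (fun N y hy => hpd N y hy) (fun y hy => hptG y hy) hx
  have hTdiff : DifferentiableOn ℂ T (ball (0 : EuclideanSpace ℂ (Fin k)) ρ) := by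
    intro x hx
    have h1 : DifferentiableAt ℂ (fun v : EuclideanSpace ℂ (Fin k) => v + ∑' n, g n v) x :=
      differentiableAt_fun_id.add (hGd x hx).differentiableAt
    exact h1.differentiableWithinAt
  exact ⟨ρ, hρ, by rw [hρdef]; linarith, T, C', hC'0, hTU, hTdiff, hT0, hDer0.fderiv,
    hconj, hTbound⟩
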